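/- Let q = p^e with p prime, 0 ≤ k < e, and let R = F_q^N be the product ring with componentwise operations. For an R-submodule C ⊆ R^n and each index S ∈ {1,…,N}, let π_S : R^n → F_q^n be the map taking the S-th component in every coordinate, and let C_S = π_S(C). Then π_S(C^{⊥k,R}) = (C_S)^{⊥k}, where C^{⊥k,R} = {ρ' ∈ R^n : Σ_{i=0}^{n−1} c_i (ρ'_i)^{p^k} = 0 in R for all c ∈ C} and (C_S)^{⊥k} is the k-Galois dual of C_S in F_q^n. -/
import Mathlib


/-- The `k`-Galois dual (as a set) of a set of codewords `C ⊆ R^ι`,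
with respect to the inner product `⟨u,v⟩ = ∑ i, u i * (v i)^pk`. -/
def galoisDualSet {R : Type*} [CommRing R] {ι : Type*} [Fintype ι]
    (pk : ℕ) (C : Set (ι → R)) : Set (ι → R) :=
  {v | ∀ c ∈ C, ∑ i, c i * v i ^ pk = 0}

theorem stmt8 {p e k N n : ℕ} (hp : p.Prime) (he : 0 < e) (hk : k < e)
    {F : Type*} [Field F] [Fintype F] (hcard : Fintype.card F = p ^ e)
    (C : Submodule (Fin N → F) (Fin n → Fin N → F)) (S : Fin N) :
    (fun ρ : Fin n → Fin N → F => fun i => ρ i S) ''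
        galoisDualSet (p ^ k) (C : Set (Fin n → Fin N → F)) =
      galoisDualSet (p ^ k)
        ((fun ρ : Fin n → Fin N → F => fun i => ρ i S) ''
          (C : Set (Fin n → Fin N → F))) := by
  have hpk : p ^ k ≠ 0 := pow_ne_zero _ hp.pos.ne'
  ext v
  constructor
  · rintro ⟨ρ, hρ, rfl⟩ c' ⟨c, hc, rfl⟩
    have := congrFun (hρ c hc) S
    simpa [Finset.sum_apply] using this
  · intro hv
    refine ⟨fun i T => if T = S then v i else 0, ?_, ?_⟩
    · intro c hc
      funext T
      by_cases hT : T = S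
      · subst hT
        simpa [Finset.sum_apply] using hv (fun i => c i T) ⟨c, hc, rfl⟩
      · simp [Finset.sum_apply, hT, zero_pow hpk]
    · funext i; simp
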